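/- Let H be a graph, let A be a connected component of H containing a vertex of degree at least 3, let 𝓑 be the set of components B of H with A not a minor of B, and let 𝓒 be the set of components C ≠ A of H with A a minor of C. Let r ≥ 3, let A* be any graph, and let H* be the disjoint union of A*, of r vertex-disjoint copies of B for every B ∈ 𝓑, and of the graph C^× (constructed from C, H and r) for every C ∈ 𝓒. Then for every subgraph H' of H* that is a model of H, the part of H' contained in A* contains A as a minor; in particular, if H* contains k edge-disjoint models of H, then A* contains k edge-disjoint models of A. -/

import Mathlib

open SimpleGraph

/-- `B` is a minor model (family of branch sets) of `H` in `G`. -/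
def IsModel {V W : Type} (H : SimpleGraph V) (G : SimpleGraph W)
    (B : V → Set W) : Prop :=
  (∀ v, (B v).Nonempty) ∧
  (∀ v, (G.induce (B v)).Connected) ∧
  (Pairwise fun u v => Disjoint (B u) (B v)) ∧
  (∀ u v, H.Adj u v → ∃ a ∈ B u, ∃ b ∈ B v, G.Adj a b)

/-- `H` is a minor of `G`. -/
def IsMinor {V W : Type} (H : SimpleGraph V) (G : SimpleGraph W) : Prop :=
  ∃ B : V → Set W, IsModel H G B

/-- `G` contains `k` pairwise edge-disjoint `H`-expansions (subgraphs containing `H`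
as a minor). -/
def EdgeDisjointExpansions {VH : Type} (H : SimpleGraph VH) {V : Type}
    (G : SimpleGraph V) (k : ℕ) : Prop :=
  ∃ M : Fin k → G.Subgraph,
    (Pairwise fun i j => Disjoint (M i).edgeSet (M j).edgeSet) ∧
    ∀ i, IsMinor H (M i).coe

/-- The class of `H`-expansions has the edge-Erdős–Pósa property: there is `f : ℕ → ℝ`
such that every (finite) graph `G` either contains `k` edge-disjoint `H`-expansions or
an edge set `X` with `|X| ≤ f k` meeting every `H`-expansion in `G` (equivalently,
`G - X` has no `H`-minor). -/
def EdgeEP {VH : Type} (H : SimpleGraph VH) : Prop :=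
  ∃ f : ℕ → ℝ, ∀ (V : Type) (_ : Fintype V) (G : SimpleGraph V) (k : ℕ),
    EdgeDisjointExpansions H G k ∨
    ∃ X : Set (Sym2 V), X ⊆ G.edgeSet ∧ (X.ncard : ℝ) ≤ f k ∧
      ¬ IsMinor H (G.deleteEdges X)
/-- `GX` is the graph `G^×` obtained from the connected subgraph `G ⊆ H` and `r`:
it has a copy `φ v` of each vertex `v` of `G` with `d_H v ≥ 3` (a *branch vertex*);
`G` decomposes into segments indexed by `ι`, each a path `P i` in `G`; a non-pendant
segment runs between two branch vertices and its internal vertices have `H`-degree 2,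
and it is replaced by `r` internally disjoint paths of length `max (length) 2` between
the copies of its ends; a pendant segment runs from a vertex `a i` with `d_G (a i) = 1`
and `d_H (a i) ≤ 2` to the closest branch vertex `b i`, and it is replaced by `r` paths
of its length which are disjoint except for the copy of `b i`. -/
def IsGTimes {V W : Type} (H : SimpleGraph V) (G : H.Subgraph) (r : ℕ)
    (GX : SimpleGraph W) : Prop :=
  ∃ (φ : V → W) (ι : Type) (pend : ι → Prop) (a b : ι → V)
    (P : ∀ i, G.spanningCoe.Walk (a i) (b i))
    (c : ι → Fin r → W) (Q : ∀ i j, GX.Walk (c i j) (φ (b i))),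
    -- distinct branch vertices get distinct copies
    Set.InjOn φ {v : V | v ∈ G.verts ∧ 3 ≤ (H.neighborSet v).ncard} ∧
    -- the segments are paths in `G` ending at a branch vertex
    (∀ i, (P i).IsPath) ∧
    (∀ i, a i ∈ G.verts ∧ b i ∈ G.verts ∧ 3 ≤ (H.neighborSet (b i)).ncard) ∧
    -- non-pendant segments: nontrivial paths between branch vertices whose internal
    -- vertices have degree 2 in `H`
    (∀ i, ¬ pend i → 3 ≤ (H.neighborSet (a i)).ncard ∧ 1 ≤ (P i).length ∧
      ∀ v ∈ (P i).support, v ≠ a i → v ≠ b i → (H.neighborSet v).ncard = 2) ∧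
    -- pendant segments: from a vertex of `G`-degree 1 and `H`-degree at most 2 to the
    -- closest branch vertex
    (∀ i, pend i → (G.neighborSet (a i)).ncard = 1 ∧ (H.neighborSet (a i)).ncard ≤ 2 ∧
      ∀ v ∈ (P i).support, v ≠ b i → (H.neighborSet v).ncard ≤ 2) ∧
    -- the segments decompose `G`
    (∀ e ∈ G.edgeSet, ∃! i, e ∈ (P i).edges) ∧
    (∀ v ∈ G.verts, 3 ≤ (H.neighborSet v).ncard ∨ ∃ i, v ∈ (P i).support) ∧
    (∀ i i', i ≠ i' → ∀ v, v ∈ (P i).support → v ∈ (P i').support →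
      3 ≤ (H.neighborSet v).ncard) ∧
    -- each segment is replaced by `r` paths of the prescribed length
    (∀ i j, (Q i j).IsPath) ∧
    (∀ i j, ¬ pend i → c i j = φ (a i) ∧ (Q i j).length = max (P i).length 2) ∧
    (∀ i j, pend i → (Q i j).length = (P i).length) ∧
    -- the `r` paths replacing a segment are disjoint except for the copies of its
    -- branch-vertex ends
    (∀ i j j', j ≠ j' → ∀ w, w ∈ (Q i j).support → w ∈ (Q i j').support →
      (¬ pend i ∧ (w = φ (a i) ∨ w = φ (b i))) ∨ (pend i ∧ w = φ (b i))) ∧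
    -- paths replacing distinct segments meet only in copies of branch vertices
    (∀ i j i' j', i ≠ i' → ∀ w, w ∈ (Q i j).support → w ∈ (Q i' j').support →
      ∃ v, v ∈ G.verts ∧ 3 ≤ (H.neighborSet v).ncard ∧ w = φ v) ∧
    -- interior vertices of the new paths, and free ends of pendant paths, are not
    -- copies of branch vertices
    (∀ i j w, w ∈ (Q i j).support → w ≠ c i j → w ≠ φ (b i) →
      ∀ v, v ∈ G.verts → 3 ≤ (H.neighborSet v).ncard → w ≠ φ v) ∧
    (∀ i j, pend i → ∀ v, v ∈ G.verts → 3 ≤ (H.neighborSet v).ncard → c i j ≠ φ v) ∧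
    -- `GX` consists exactly of the copies of branch vertices and the new paths
    (∀ w : W, (∃ v, v ∈ G.verts ∧ 3 ≤ (H.neighborSet v).ncard ∧ w = φ v) ∨
      ∃ i j, w ∈ (Q i j).support) ∧
    (∀ e : Sym2 W, e ∈ GX.edgeSet ↔ ∃ i j, e ∈ (Q i j).edges)

/-- Disjoint union of a family of graphs, on the sigma type of their vertex sets. -/
def disjUnion {ι : Type} {V : ι → Type} (G : ∀ i, SimpleGraph (V i)) :
    SimpleGraph (Σ i, V i) where
  Adj x y := ∃ (i : ι) (a b : V i), (G i).Adj a b ∧ x = ⟨i, a⟩ ∧ y = ⟨i, b⟩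
  symm := by
    constructor
    rintro _ _ ⟨i, a, b, h, rfl, rfl⟩
    exact ⟨i, b, a, h.symm, rfl, rfl⟩
  loopless := by
    constructor
    rintro _ ⟨i, a, b, h, rfl, he⟩
    obtain ⟨-, h2⟩ := Sigma.mk.inj_iff.mp he
    exact (G i).irrefl (eq_of_heq h2 ▸ h)

/-- The part of a subgraph of a disjoint union that lies in the `i₀`-th summand. -/
def restrictPart {ι : Type} {V : ι → Type} (G : ∀ i, SimpleGraph (V i))
    (S : (disjUnion G).Subgraph) (i₀ : ι) : (G i₀).Subgraph where
  verts := {x : V i₀ | (⟨i₀, x⟩ : Σ i, V i) ∈ S.verts}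
  Adj x y := S.Adj ⟨i₀, x⟩ ⟨i₀, y⟩
  adj_sub := by
    intro x y h
    obtain ⟨i, aa, bb, hab, h1, h2⟩ := S.adj_sub h
    obtain ⟨rfl, hx⟩ := Sigma.mk.inj_iff.mp h1
    obtain ⟨-, hy⟩ := Sigma.mk.inj_iff.mp h2
    rw [eq_of_heq hx, eq_of_heq hy]
    exact hab
  edge_vert := fun h => S.edge_vert h
  symm := ⟨fun x y h => S.symm.symm _ _ h⟩

/-- The connected component `c` of `H`, as a graph. -/
def compGraph {V : Type} (H : SimpleGraph V) (c : H.ConnectedComponent) :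
    SimpleGraph c.supp :=
  H.induce c.supp

/-- The components `B` of `H` such that `A` is not a minor of `B` (the set `𝓑`). -/
def BsetT {V : Type} (H : SimpleGraph V) (A : H.ConnectedComponent) : Type :=
  {c : H.ConnectedComponent // ¬ IsMinor (compGraph H A) (compGraph H c)}

/-- The components `C ≠ A` of `H` such that `A` is a minor of `C` (the set `𝓒`). -/
def CsetT {V : Type} (H : SimpleGraph V) (A : H.ConnectedComponent) : Type :=
  {c : H.ConnectedComponent // c ≠ A ∧ IsMinor (compGraph H A) (compGraph H c)}

/-- Vertex types of the summands of `H*`: one summand for `A*`, `r` summands for each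
`B ∈ 𝓑`, and one summand (carrying `C^×`) for each `C ∈ 𝓒`. -/
def famV {V : Type} (H : SimpleGraph V) (A : H.ConnectedComponent) (r : ℕ)
    (WA : Type) (WC : CsetT H A → Type) :
    Unit ⊕ (BsetT H A × Fin r) ⊕ CsetT H A → Type
  | Sum.inl _ => WA
  | Sum.inr (Sum.inl p) => p.1.1.supp
  | Sum.inr (Sum.inr c) => WC c

/-- The summands of `H*`: the graph `A*`, `r` copies of each `B ∈ 𝓑`, and the graph
`C^×` for each `C ∈ 𝓒`. -/
def fam {V : Type} (H : SimpleGraph V) (A : H.ConnectedComponent) (r : ℕ)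
    {WA : Type} (Astar : SimpleGraph WA) {WC : CsetT H A → Type}
    (CX : ∀ c, SimpleGraph (WC c)) :
    ∀ i : Unit ⊕ (BsetT H A × Fin r) ⊕ CsetT H A, SimpleGraph (famV H A r WA WC i)
  | Sum.inl _ => Astar
  | Sum.inr (Sum.inl p) => compGraph H p.1.1
  | Sum.inr (Sum.inr c) => CX c

section Aux

variable {V W : Type}

lemma const_of_reachable {G : SimpleGraph V} {β : Type*} {f : V → β}
    (hf : ∀ u v, G.Adj u v → f u = f v) {u v : V} (h : G.Reachable u v) :
    f u = f v := by
  obtain ⟨p⟩ := h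
  induction p with
  | nil => rfl
  | cons h p ih => exact (hf _ _ h).trans ih

lemma connected_induce_singleton (G : SimpleGraph V) (v : V) :
    (G.induce {v}).Connected := by
  haveI : Nonempty ({v} : Set V) := ⟨⟨v, rfl⟩⟩
  constructor
  intro x y
  have : x = y := Subtype.ext (x.2.trans y.2.symm)
  exact this ▸ SimpleGraph.Reachable.refl x

lemma isMinor_refl (G : SimpleGraph V) : IsMinor G G := by
  refine ⟨fun v => {v}, fun v => ⟨v, rfl⟩, fun v => connected_induce_singleton G v,
    fun u v huv => ?_, fun u v h => ⟨u, rfl, v, rfl, h⟩⟩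
  simp [Set.disjoint_singleton_left, huv]

lemma glue_connected {VD VX : Type} (D : SimpleGraph VD) (X : SimpleGraph VX)
    (K : VD → Set VX) (hKconn : ∀ d, (X.induce (K d)).Connected)
    (hKne : ∀ d, (K d).Nonempty)
    (hadj : ∀ d d', D.Adj d d' → ∃ p ∈ K d, ∃ q ∈ K d', X.Adj p q)
    (s : Set VD) (hs : (D.induce s).Connected) :
    (X.induce (⋃ d ∈ s, K d)).Connected := by
  set U : Set VX := ⋃ d ∈ s, K d with hU
  have hsub : ∀ d ∈ s, K d ⊆ U := fun d hd x hx => Set.mem_biUnion hd hx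
  have hwithin : ∀ d (hd : d ∈ s) (p q : VX) (hp : p ∈ K d) (hq : q ∈ K d),
      (X.induce U).Reachable ⟨p, hsub d hd hp⟩ ⟨q, hsub d hd hq⟩ := by
    intro d hd p q hp hq
    have h := (hKconn d).preconnected ⟨p, hp⟩ ⟨q, hq⟩
    let f : SimpleGraph.Hom (X.induce (K d)) (X.induce U) :=
      ⟨fun z => ⟨z.1, hsub d hd z.2⟩, fun {a b} hab => hab⟩
    exact h.map f
  obtain ⟨⟨d0, hd0⟩⟩ := hs.nonempty
  haveI : Nonempty ↥U := ⟨⟨(hKne d0).some, hsub d0 hd0 (hKne d0).some_mem⟩⟩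
  constructor
  have cross : ∀ (z z' : ↥s) (w : (D.induce s).Walk z z') (p q : VX) (hp : p ∈ K z.1)
      (hq : q ∈ K z'.1), (X.induce U).Reachable ⟨p, hsub z.1 z.2 hp⟩ ⟨q, hsub z'.1 z'.2 hq⟩ := by
    intro z z' w
    induction w with
    | nil =>
      intro p q hp hq
      exact hwithin _ (Subtype.coe_prop _) p q hp hq
    | cons hzz w ih =>
      intro p q hp hq
      obtain ⟨p1, hp1, q1, hq1, hadj1⟩ := hadj _ _ hzz
      refine ((hwithin _ (Subtype.coe_prop _) p p1 hp hp1).trans ?_).trans (ih q1 q hq1 hq)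
      exact SimpleGraph.Adj.reachable hadj1
  rintro ⟨p, hp⟩ ⟨q, hq⟩
  obtain ⟨d, hd, hpd⟩ := Set.mem_iUnion₂.mp hp
  obtain ⟨d', hd', hqd⟩ := Set.mem_iUnion₂.mp hq
  obtain ⟨w⟩ := hs.preconnected ⟨d, hd⟩ ⟨d', hd'⟩
  exact cross ⟨d, hd⟩ ⟨d', hd'⟩ w p q hpd hqd

lemma isMinor_trans {VA VD VX : Type} {A : SimpleGraph VA} {D : SimpleGraph VD}
    {X : SimpleGraph VX} (h1 : IsMinor A D) (h2 : IsMinor D X) : IsMinor A X := by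
  obtain ⟨B1, hne1, hc1, hd1, ha1⟩ := h1
  obtain ⟨B2, hne2, hc2, hd2, ha2⟩ := h2
  refine ⟨fun a => ⋃ d ∈ B1 a, B2 d, ?_, ?_, ?_, ?_⟩
  · intro a
    obtain ⟨d, hd⟩ := hne1 a
    exact ⟨(hne2 d).some, Set.mem_biUnion hd (hne2 d).some_mem⟩
  · intro a
    exact glue_connected D X B2 hc2 hne2 ha2 (B1 a) (hc1 a)
  · intro a a' haa'
    rw [Set.disjoint_left]
    rintro x hx hx'
    obtain ⟨d, hd, hxd⟩ := Set.mem_iUnion₂.mp hx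
    obtain ⟨d', hd', hxd'⟩ := Set.mem_iUnion₂.mp hx'
    rcases eq_or_ne d d' with rfl | hdd'
    · exact Set.disjoint_left.mp (hd1 haa') hd hd'
    · exact Set.disjoint_left.mp (hd2 hdd') hxd hxd'
  · intro a a' haa'
    obtain ⟨d, hd, d', hd', hDdd'⟩ := ha1 a a' haa'
    obtain ⟨x, hx, y, hy, hXxy⟩ := ha2 d d' hDdd'
    exact ⟨x, Set.mem_biUnion hd hx, y, Set.mem_biUnion hd' hy, hXxy⟩

end Aux
section Aux2

open SimpleGraph

lemma isMinor_of_subgraph_coe {V0 W0 : Type} {H0 : SimpleGraph V0} {X : SimpleGraph W0}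
    (M : X.Subgraph) (h : IsMinor H0 M.coe) : IsMinor H0 X := by
  obtain ⟨B, hne, hc, hd, ha⟩ := h
  refine ⟨fun v => Subtype.val '' B v, fun v => (hne v).image _, fun v => ?_, ?_, ?_⟩
  · haveI : Nonempty ↥(Subtype.val '' B v) := ((hne v).image _).to_subtype
    constructor
    have surj : Function.Surjective
        (fun z : ↥(B v) => (⟨z.1.1, ⟨z.1, z.2, rfl⟩⟩ : ↥(Subtype.val '' B v))) := by
      rintro ⟨_, w, hw, rfl⟩
      exact ⟨⟨w, hw⟩, rfl⟩
    refine SimpleGraph.Preconnected.map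
      (⟨fun z => ⟨z.1.1, ⟨z.1, z.2, rfl⟩⟩, ?_⟩ : (M.coe.induce (B v)) →g (X.induce (Subtype.val '' B v)))
      surj (hc v).preconnected
    intro a b hab
    exact M.adj_sub hab
  · intro u v huv
    exact (Set.disjoint_image_iff Subtype.val_injective).mpr (hd huv)
  · intro u v huv
    obtain ⟨a, ha', b, hb', hab⟩ := ha u v huv
    exact ⟨a.1, ⟨a, ha', rfl⟩, b.1, ⟨b, hb', rfl⟩, M.adj_sub hab⟩

lemma isModel_induce {V0 W0 : Type} {H0 : SimpleGraph V0} {X : SimpleGraph W0}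
    {B : V0 → Set W0} (h : IsModel H0 X B) (s : Set V0) :
    IsModel (H0.induce s) X (fun v => B v.1) := by
  obtain ⟨h1, h2, h3, h4⟩ := h
  exact ⟨fun v => h1 v.1, fun v => h2 v.1,
    fun u v huv => h3 (fun e => huv (Subtype.ext e)),
    fun u v huv => h4 u.1 v.1 huv⟩

lemma three_le_ncard_of_three {α : Type*} {s : Set α} {a b c : α} (ha : a ∈ s) (hb : b ∈ s)
    (hc : c ∈ s) (hab : a ≠ b) (hac : a ≠ c) (hbc : b ≠ c) (hs : s.Finite) : 3 ≤ s.ncard := by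
  have h1 : ({a, b, c} : Set α) ⊆ s := by
    intro x hx
    rcases hx with rfl | rfl | rfl <;> assumption
  have h2 : ({a, b, c} : Set α).ncard = 3 := by
    rw [Set.ncard_insert_of_notMem (by simp [hab, hac]) (Set.toFinite _),
      Set.ncard_pair hbc]
  rw [← h2]
  exact Set.ncard_le_ncard h1 hs

lemma exists_three_of_three_le_ncard {α : Type*} {s : Set α} (h : 3 ≤ s.ncard) :
    ∃ a b c, a ∈ s ∧ b ∈ s ∧ c ∈ s ∧ a ≠ b ∧ a ≠ c ∧ b ≠ c := by
  obtain ⟨t, hts, ht⟩ := Set.exists_subset_card_eq h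
  obtain ⟨a, b, c, hab, hac, hbc, rfl⟩ := Set.ncard_eq_three.mp ht
  exact ⟨a, b, c, hts (by simp), hts (by simp), hts (by simp), hab, hac, hbc⟩

/-- Every finite connected graph has at least `n - 1` edges. -/
lemma card_le_card_edgeFinset_add_one {U : Type} [Fintype U] (K : SimpleGraph U)
    [DecidableRel K.Adj] (hc : K.Connected) :
    Fintype.card U ≤ K.edgeFinset.card + 1 := by
  classical
  obtain ⟨r0⟩ := hc.nonempty
  have hstep : ∀ w : U, w ≠ r0 → ∃ u, K.Adj w u ∧ K.dist u r0 < K.dist w r0 := by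
    intro w hw
    have hreach : K.Reachable w r0 := hc.preconnected w r0
    have hpos : 0 < K.dist w r0 := hreach.pos_dist_of_ne hw
    obtain ⟨p, hp⟩ := hreach.exists_walk_length_eq_dist
    cases p with
    | nil => exact absurd rfl hw
    | cons h q =>
      rename_i u
      refine ⟨u, h, ?_⟩
      have := SimpleGraph.dist_le q
      simp [SimpleGraph.Walk.length_cons] at hp
      omega
  choose nbr hnbr using hstep
  have hcard : (Finset.univ.erase r0).card ≤ K.edgeFinset.card := by
    refine Finset.card_le_card_of_injOn
      (fun w => if h : w = r0 then s(r0, r0) else s(w, nbr w h)) ?_ ?_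
    · intro w hw
      rw [Finset.mem_coe, Finset.mem_erase] at hw
      simp only [dif_neg hw.1, Finset.mem_coe, SimpleGraph.mem_edgeFinset, SimpleGraph.mem_edgeSet]
      exact (hnbr w hw.1).1
    · intro w1 h1 w2 h2 he
      rw [Finset.mem_coe, Finset.mem_erase] at h1 h2
      simp only [dif_neg h1.1, dif_neg h2.1] at he
      rcases Sym2.eq_iff.mp he with ⟨rfl, -⟩ | ⟨e1, e2⟩
      · rfl
      · exfalso
        have d1 := (hnbr w1 h1.1).2
        have d2 := (hnbr w2 h2.1).2
        rw [e2] at d1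
        rw [← e1] at d2
        omega
  have her : (Finset.univ.erase r0).card = Fintype.card U - 1 := by
    rw [Finset.card_erase_of_mem (Finset.mem_univ r0), Finset.card_univ]
  have hpos : 1 ≤ Fintype.card U := Fintype.card_pos_iff.mpr ⟨r0⟩
  omega

end Aux2
section Aux3

open SimpleGraph

lemma exists_deg3_vertex {W : Type} [Finite W] (X : SimpleGraph W) (B0 : Set W)
    (hc : (X.induce B0).Connected) (a x : Fin 3 → W) (ha : ∀ t, a t ∈ B0)
    (hx : ∀ t, x t ∉ B0) (hxinj : Function.Injective x)
    (hadj : ∀ t, X.Adj (a t) (x t)) :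
    ∃ w ∈ B0, 3 ≤ (X.neighborSet w).ncard := by
  classical
  by_contra hcon
  push_neg at hcon
  haveI := Fintype.ofFinite W
  haveI : Fintype ↥B0 := Fintype.ofFinite _
  set K : SimpleGraph ↥B0 := X.induce B0 with hK
  haveI : DecidableRel K.Adj := Classical.decRel _
  -- each vertex: K-degree + number of attachments ≤ 2
  have hdeg : ∀ z : ↥B0, K.degree z + (Finset.univ.filter (fun t : Fin 3 => a t = z.1)).card ≤ 2 := by
    intro z
    have hsub : (Subtype.val '' (K.neighborSet z)) ∪ (x '' {t | a t = z.1})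
        ⊆ X.neighborSet z.1 := by
      rintro y (⟨y', hy', rfl⟩ | ⟨t, ht, rfl⟩)
      · exact hy'
      · exact (ht ▸ hadj t).symm.symm
    have hdisj : Disjoint (Subtype.val '' (K.neighborSet z)) (x '' {t | a t = z.1}) := by
      rw [Set.disjoint_left]
      rintro y ⟨y', hy', rfl⟩ ⟨t, ht, hxy⟩
      exact hx t (hxy ▸ y'.2)
    have hcount : (Subtype.val '' (K.neighborSet z)).ncard + (x '' {t | a t = z.1}).ncard
        ≤ (X.neighborSet z.1).ncard := by
      rw [← Set.ncard_union_eq hdisj (Set.toFinite _) (Set.toFinite _)]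
      exact Set.ncard_le_ncard hsub (Set.toFinite _)
    rw [Set.ncard_image_of_injective _ Subtype.val_injective,
      Set.ncard_image_of_injective _ hxinj] at hcount
    have h1 : (K.neighborSet z).ncard = K.degree z := by
      rw [Set.ncard_eq_toFinset_card', SimpleGraph.degree, SimpleGraph.neighborFinset_def]
    have h2 : ({t : Fin 3 | a t = z.1}).ncard
        = (Finset.univ.filter (fun t : Fin 3 => a t = z.1)).card := by
      rw [Set.ncard_eq_toFinset_card']
      congr 1
      ext t
      simp
    have h3 := hcon z.1 z.2
    omega
  have hsum : ∑ z : ↥B0, (K.degree z + (Finset.univ.filter (fun t : Fin 3 => a t = z.1)).card)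
      ≤ 2 * Fintype.card ↥B0 := by
    calc ∑ z : ↥B0, (K.degree z + (Finset.univ.filter (fun t : Fin 3 => a t = z.1)).card)
        ≤ ∑ _z : ↥B0, 2 := Finset.sum_le_sum (fun z _ => hdeg z)
      _ = 2 * Fintype.card ↥B0 := by rw [Finset.sum_const, Finset.card_univ]; ring
  rw [Finset.sum_add_distrib, SimpleGraph.sum_degrees_eq_twice_card_edges] at hsum
  have hfib : ∑ z : ↥B0, (Finset.univ.filter (fun t : Fin 3 => a t = z.1)).card = 3 := by
    have := Finset.card_eq_sum_card_fiberwise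
      (f := fun t : Fin 3 => (⟨a t, ha t⟩ : ↥B0)) (s := Finset.univ) (t := Finset.univ)
      (fun t _ => Finset.mem_univ _)
    simp only [Finset.card_univ, Fintype.card_fin] at this
    refine Eq.trans ?_ this.symm
    refine Finset.sum_congr rfl fun z _ => ?_
    congr 1
    ext t
    simp [Subtype.ext_iff]
  rw [hfib] at hsum
  have hedge := card_le_card_edgeFinset_add_one K hc
  haveI : Nonempty ↥B0 := ⟨⟨a 0, ha 0⟩⟩
  have hpos : 1 ≤ Fintype.card ↥B0 := Fintype.card_pos_iff.mpr ‹_›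
  omega

end Aux3
section Aux4

open SimpleGraph

lemma path_start_edge {V : Type} {G : SimpleGraph V} {v w y : V} (q : G.Walk v w)
    (hq : q.IsPath) (he : s(v, y) ∈ q.edges) : y = q.getVert 1 := by
  cases q with
  | nil => simp at he
  | cons h q' =>
    rename_i v2
    rw [SimpleGraph.Walk.edges_cons, List.mem_cons] at he
    rcases he with he | he
    · rcases Sym2.eq_iff.mp he with ⟨-, rfl⟩ | ⟨h1, rfl⟩
      · simp [SimpleGraph.Walk.getVert_cons_succ]
      · exact absurd h1 h.ne
    · exact absurd (SimpleGraph.Walk.fst_mem_support_of_mem_edges q' he)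
        ((SimpleGraph.Walk.cons_isPath_iff _ _).mp hq).2

lemma path_incident_pair {V : Type} {G : SimpleGraph V} {u w : V} (p : G.Walk u w)
    (hp : p.IsPath) (z : V) :
    ∃ y1 y2, ∀ y, s(z, y) ∈ p.edges → y = y1 ∨ y = y2 := by
  induction p with
  | nil => exact ⟨z, z, by simp⟩
  | cons h q ih =>
    rename_i u' v' w'
    rw [SimpleGraph.Walk.cons_isPath_iff _ _] at hp
    rcases eq_or_ne z u' with rfl | hzu
    · refine ⟨v', v', fun y hy => ?_⟩
      rw [SimpleGraph.Walk.edges_cons, List.mem_cons] at hy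
      rcases hy with hy | hy
      · rcases Sym2.eq_iff.mp hy with ⟨-, rfl⟩ | ⟨h1, rfl⟩
        · exact Or.inl rfl
        · exact absurd h1 h.ne
      · exact absurd (SimpleGraph.Walk.fst_mem_support_of_mem_edges q hy) hp.2
    · rcases eq_or_ne z v' with hzv | hzv
      · refine ⟨u', q.getVert 1, fun y hy => ?_⟩
        rw [SimpleGraph.Walk.edges_cons, List.mem_cons] at hy
        rcases hy with hy | hy
        · rcases Sym2.eq_iff.mp hy with ⟨h1, -⟩ | ⟨-, rfl⟩
          · exact absurd h1 hzu
          · exact Or.inl rfl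
        · rw [hzv] at hy
          exact Or.inr (path_start_edge q hp.1 hy)
      · obtain ⟨y1, y2, hy12⟩ := ih hp.1
        refine ⟨y1, y2, fun y hy => ?_⟩
        rw [SimpleGraph.Walk.edges_cons, List.mem_cons] at hy
        rcases hy with hy | hy
        · rcases Sym2.eq_iff.mp hy with ⟨h1, -⟩ | ⟨h1, -⟩
          · exact absurd h1 hzu
          · exact absurd h1 hzv
        · exact hy12 y hy

end Aux4
section Aux5

open SimpleGraph

lemma gtimes_deg3 {V W : Type} [Finite W] {H : SimpleGraph V} {G : H.Subgraph} {r : ℕ}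
    {GX : SimpleGraph W} (φ : V → W) {ι : Type} (pend : ι → Prop) (a b : ι → V)
    (c : ι → Fin r → W) (Q : ∀ (i : ι) (j : Fin r), GX.Walk (c i j) (φ (b i)))
    (h3 : ∀ i, a i ∈ G.verts ∧ b i ∈ G.verts ∧ 3 ≤ (H.neighborSet (b i)).ncard)
    (h4 : ∀ i, ¬ pend i → 3 ≤ (H.neighborSet (a i)).ncard)
    (h9 : ∀ i j, (Q i j).IsPath)
    (h12 : ∀ i j j', j ≠ j' → ∀ w, w ∈ (Q i j).support → w ∈ (Q i j').support →
      (¬ pend i ∧ (w = φ (a i) ∨ w = φ (b i))) ∨ (pend i ∧ w = φ (b i)))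
    (h13 : ∀ i j i' j', i ≠ i' → ∀ w, w ∈ (Q i j).support → w ∈ (Q i' j').support →
      ∃ v, v ∈ G.verts ∧ 3 ≤ (H.neighborSet v).ncard ∧ w = φ v)
    (h16 : ∀ w : W, (∃ v, v ∈ G.verts ∧ 3 ≤ (H.neighborSet v).ncard ∧ w = φ v) ∨
      ∃ i j, w ∈ (Q i j).support)
    (h17 : ∀ e : Sym2 W, e ∈ GX.edgeSet ↔ ∃ i j, e ∈ (Q i j).edges)
    (x : W) (hx : 3 ≤ (GX.neighborSet x).ncard) :
    ∃ v, v ∈ G.verts ∧ 3 ≤ (H.neighborSet v).ncard ∧ x = φ v := by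
  rcases h16 x with hbr | ⟨i0, j0, hsupp⟩
  · exact hbr
  by_contra hcon
  obtain ⟨y1, y2, hy12⟩ := path_incident_pair (Q i0 j0) (h9 i0 j0) x
  have hsub : GX.neighborSet x ⊆ {y1, y2} := by
    intro y hy
    have he : s(x, y) ∈ GX.edgeSet := (SimpleGraph.mem_edgeSet _).mpr hy
    obtain ⟨i', j', he'⟩ := (h17 _).mp he
    have hxsupp : x ∈ (Q i' j').support := SimpleGraph.Walk.fst_mem_support_of_mem_edges _ he'
    rcases eq_or_ne i' i0 with rfl | hi
    · rcases eq_or_ne j' j0 with rfl | hj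
      · rcases hy12 y he' with rfl | rfl
        · exact Set.mem_insert _ _
        · exact Set.mem_insert_of_mem _ rfl
      · exfalso
        rcases h12 i' j' j0 hj x hxsupp hsupp with ⟨hnp, hw⟩ | ⟨_, hw⟩
        · rcases hw with hw | hw
          · exact hcon ⟨a i', (h3 i').1, h4 i' hnp, hw⟩
          · exact hcon ⟨b i', (h3 i').2.1, (h3 i').2.2, hw⟩
        · exact hcon ⟨b i', (h3 i').2.1, (h3 i').2.2, hw⟩
    · exact absurd (h13 i' j' i0 j0 hi x hxsupp hsupp) hcon
  have : (GX.neighborSet x).ncard ≤ 2 := by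
    refine le_trans (Set.ncard_le_ncard hsub (Set.toFinite _)) ?_
    refine le_trans (Set.ncard_insert_le _ _) ?_
    simp [Set.ncard_singleton]
  omega

end Aux5
section Aux6

open SimpleGraph

lemma proj_minor {I : Type} {VF : I → Type} {F : ∀ i, SimpleGraph (VF i)}
    (S : (disjUnion F).Subgraph) {V0 : Type} {H0 : SimpleGraph V0}
    {B : V0 → Set ↥S.verts} (hm : IsModel H0 S.coe B) (i : I)
    (hloc : ∀ v, ∀ w ∈ B v, w.1.1 = i) :
    IsMinor H0 (restrictPart F S i).coe := by
  obtain ⟨h1, h2, h3, h4⟩ := hm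
  set T := restrictPart F S i with hT
  let emb : ↥T.verts → ↥S.verts := fun z => ⟨⟨i, z.1⟩, z.2⟩
  have hembinj : Function.Injective emb := by
    intro z z' hzz
    apply Subtype.ext
    have := congrArg Subtype.val hzz
    simp only [emb] at this
    exact eq_of_heq (Sigma.mk.inj_iff.mp this).2
  refine ⟨fun v => emb ⁻¹' B v, fun v => ?_, fun v => ?_, ?_, ?_⟩
  · obtain ⟨w, hw⟩ := h1 v
    have hwi := hloc v w hw
    obtain ⟨⟨i', y⟩, hS⟩ := w
    dsimp at hwi
    subst hwi
    exact ⟨⟨y, hS⟩, hw⟩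
  · -- connectivity via a surjective hom from the model set
    have hKne : (emb ⁻¹' B v).Nonempty := by
      obtain ⟨w, hw⟩ := h1 v
      have hwi := hloc v w hw
      obtain ⟨⟨i', y⟩, hS⟩ := w
      dsimp at hwi
      subst hwi
      exact ⟨⟨y, hS⟩, hw⟩
    haveI : Nonempty ↥(emb ⁻¹' B v) := hKne.to_subtype
    constructor
    have hsurj : Function.Surjective
        (fun z : ↥(emb ⁻¹' B v) => (⟨emb z.1, z.2⟩ : ↥(B v))) := by
      rintro ⟨w, hw⟩
      have hwi := hloc v w hw
      obtain ⟨⟨i', y⟩, hS⟩ := w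
      dsimp at hwi
      subst hwi
      exact ⟨⟨⟨y, hS⟩, hw⟩, rfl⟩
    -- the inverse of the bijective hom below is a hom, giving preconnectivity
    have key : ∀ z z' : ↥(emb ⁻¹' B v),
        (S.coe.induce (B v)).Adj ⟨emb z.1, z.2⟩ ⟨emb z'.1, z'.2⟩ ↔
        (T.coe.induce (emb ⁻¹' B v)).Adj z z' := by
      intro z z'
      constructor
      · intro hadj
        exact hadj
      · intro hadj
        exact hadj
    have hpre := (h2 v).preconnected
    intro z z'
    obtain ⟨p⟩ := hpre ⟨emb z.1, z.2⟩ ⟨emb z'.1, z'.2⟩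
    -- transfer the walk back along the bijection
    have : ∀ (aa bb : ↥(B v)) (p : (S.coe.induce (B v)).Walk aa bb)
        (za zb : ↥(emb ⁻¹' B v)), aa = ⟨emb za.1, za.2⟩ → bb = ⟨emb zb.1, zb.2⟩ →
        (T.coe.induce (emb ⁻¹' B v)).Reachable za zb := by
      intro aa bb p
      induction p with
      | nil =>
        intro za zb ha hb
        have : za = zb := by
          apply Subtype.ext; apply hembinj
          have := ha.symm.trans hb
          exact congrArg Subtype.val this
        exact this ▸ SimpleGraph.Reachable.refl za
      | cons hadj q ih =>
        rename_i aa' cc' bb'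
        intro za zb ha hb
        obtain ⟨zc, hzc⟩ := hsurj cc'
        have hzc2 : (⟨emb zc.1, zc.2⟩ : ↥(B v)) = cc' := hzc
        have step : (T.coe.induce (emb ⁻¹' B v)).Adj za zc := by
          rw [← key za zc]
          rw [← ha, hzc2]
          exact hadj
        exact (step.reachable).trans (ih zc zb hzc.symm hb)
    exact this _ _ p z z' rfl rfl
  · intro u v huv
    exact (h3 huv).preimage emb
  · intro u v huv
    obtain ⟨aa, haa, bb, hbb, hab⟩ := h4 u v huv
    have hai := hloc u aa haa
    have hbi := hloc v bb hbb
    obtain ⟨⟨ia, ya⟩, hSa⟩ := aa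
    obtain ⟨⟨ib, yb⟩, hSb⟩ := bb
    dsimp at hai hbi
    subst hai; subst hbi
    exact ⟨⟨ya, hSa⟩, haa, ⟨yb, hSb⟩, hbb, hab⟩

end Aux6
/-- Let `A` be a component of `H` containing a vertex of degree at
least 3, let `𝓑` and `𝓒` be as above, let `r ≥ 3`, let `A*` be any graph, and let `H*`
be the disjoint union of `A*`, of `r` copies of each `B ∈ 𝓑`, and of `C^×` for each
`C ∈ 𝓒`. Then for every subgraph of `H*` that is a model of `H`, its part in `A*`
contains `A` as a minor; in particular, `k` edge-disjoint models of `H` in `H*` yield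
`k` edge-disjoint models of `A` in `A*`. -/
theorem minor_in_Astar_of_model {V : Type} [Fintype V] (H : SimpleGraph V)
    (A : H.ConnectedComponent) (hA3 : ∃ v ∈ A.supp, 3 ≤ (H.neighborSet v).ncard)
    (r : ℕ) (hr : 3 ≤ r)
    {WA : Type} [Fintype WA] (Astar : SimpleGraph WA)
    {WC : CsetT H A → Type} [∀ c, Fintype (WC c)] (CX : ∀ c, SimpleGraph (WC c))
    (hCX : ∀ c : CsetT H A, IsGTimes H ((⊤ : H.Subgraph).induce c.1.supp) r (CX c)) :
    (∀ S : (disjUnion (fam H A r Astar CX)).Subgraph, IsMinor H S.coe →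
      IsMinor (compGraph H A) (restrictPart (fam H A r Astar CX) S (Sum.inl ())).coe) ∧
    (∀ k : ℕ, EdgeDisjointExpansions H (disjUnion (fam H A r Astar CX)) k →
      EdgeDisjointExpansions (compGraph H A) Astar k) := by
  classical
  haveI hFcc : Finite H.ConnectedComponent := Quot.finite _
  haveI hFB : Finite (BsetT H A) := by unfold BsetT; exact Subtype.finite
  haveI hFC : Finite (CsetT H A) := by unfold CsetT; exact Subtype.finite
  haveI hFfam : ∀ i, Finite (famV H A r WA WC i) := by
    rintro (u | p | c)
    · exact Finite.of_fintype WA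
    · exact Subtype.finite
    · exact Finite.of_fintype (WC c)
  haveI hFsig : Finite (Σ i, famV H A r WA WC i) := by
    exact Finite.instSigma
  choose φ ι pend pa pb pP pc pQ hg1 hg2 hg3 hg4 hg5 hg6 hg7 hg8 hg9 hg10 hg11
    hg12 hg13 hg14 hg15 hg16 hg17 using hCX
  have P1 : ∀ S : (disjUnion (fam H A r Astar CX)).Subgraph, IsMinor H S.coe →
      IsMinor (compGraph H A) (restrictPart (fam H A r Astar CX) S (Sum.inl ())).coe := by
    intro S hS
    obtain ⟨B, hm⟩ := hS
    obtain ⟨h1, h2, h3, h4⟩ := id hm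
    choose w0 hw0 using h1
    set ϑ : V → (Unit ⊕ (BsetT H A × Fin r) ⊕ CsetT H A) := fun v => (w0 v).1.1 with hϑdef
    have hidx : ∀ (v : V) (w : ↥S.verts), w ∈ B v → w.1.1 = ϑ v := by
      intro v w hw
      have hconst : ∀ (x y : ↥(B v)), (S.coe.induce (B v)).Reachable x y →
          x.1.1.1 = y.1.1.1 := by
        intro x y hr'
        refine const_of_reachable (f := fun z : ↥(B v) => z.1.1.1) ?_ hr'
        intro p q hpq
        show p.1.1.1 = q.1.1.1
        obtain ⟨i, aa, bb, hab, e1, e2⟩ :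
            (disjUnion (fam H A r Astar CX)).Adj p.1.1 q.1.1 := S.adj_sub hpq
        rw [e1, e2]
      exact hconst ⟨w, hw⟩ ⟨w0 v, hw0 v⟩ ((h2 v).preconnected _ _)
    have hadjϑ : ∀ u v, H.Adj u v → ϑ u = ϑ v := by
      intro u v huv
      obtain ⟨aa, haa, bb, hbb, hab⟩ := h4 u v huv
      have h5 := hidx u aa haa
      have h6 := hidx v bb hbb
      obtain ⟨i, p, q, hpq, e1, e2⟩ :
          (disjUnion (fam H A r Astar CX)).Adj aa.1 bb.1 := S.adj_sub hab
      rw [← h5, ← h6, e1, e2]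
    have hreachϑ : ∀ u v, H.Reachable u v → ϑ u = ϑ v :=
      fun u v h => const_of_reachable hadjϑ h
    have hcomp : ∀ (v : V) (i : Unit ⊕ (BsetT H A × Fin r) ⊕ CsetT H A), ϑ v = i →
        IsMinor (compGraph H (H.connectedComponentMk v))
          (restrictPart (fam H A r Astar CX) S i).coe := by
      intro v i hvi
      refine proj_minor S (isModel_induce hm (H.connectedComponentMk v).supp) i ?_
      rintro ⟨u, hu⟩ w hw
      have hcc : H.connectedComponentMk u = H.connectedComponentMk v :=
        (SimpleGraph.ConnectedComponent.mem_supp_iff _ _).mp hu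
      have hru : H.Reachable u v := (SimpleGraph.ConnectedComponent.eq).mp hcc
      rw [hidx u w hw, hreachϑ u v hru, hvi]
    have hAminor : ∀ v : V, (H.connectedComponentMk v = A ∨
        (H.connectedComponentMk v ≠ A ∧
          IsMinor (compGraph H A) (compGraph H (H.connectedComponentMk v)))) →
        IsMinor (compGraph H A) (compGraph H (H.connectedComponentMk v)) := by
      rintro v (hA | ⟨-, hmin⟩)
      · rw [hA]; exact isMinor_refl _
      · exact hmin
    have hnotB : ∀ v : V, (H.connectedComponentMk v = A ∨
        (H.connectedComponentMk v ≠ A ∧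
          IsMinor (compGraph H A) (compGraph H (H.connectedComponentMk v)))) →
        ∀ p : BsetT H A × Fin r, ϑ v ≠ Sum.inr (Sum.inl p) := by
      intro v hv p hp
      have h5 := hcomp v _ hp
      have h6 := isMinor_of_subgraph_coe _ h5
      exact p.1.2 (isMinor_trans (hAminor v hv) h6)
    by_cases hKEY : ∃ v : V, (H.connectedComponentMk v = A ∨
        (H.connectedComponentMk v ≠ A ∧
          IsMinor (compGraph H A) (compGraph H (H.connectedComponentMk v)))) ∧
        ϑ v = Sum.inl ()
    · obtain ⟨v, hv, hvi⟩ := hKEY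
      exact isMinor_trans (hAminor v hv) (hcomp v _ hvi)
    · push_neg at hKEY
      exfalso
      set LHS : Set V := {v : V | 3 ≤ (H.neighborSet v).ncard ∧
        (H.connectedComponentMk v = A ∨ (H.connectedComponentMk v ≠ A ∧
          IsMinor (compGraph H A) (compGraph H (H.connectedComponentMk v))))} with hLHS
      set RHS : Set V := {v : V | 3 ≤ (H.neighborSet v).ncard ∧
        H.connectedComponentMk v ≠ A ∧
          IsMinor (compGraph H A) (compGraph H (H.connectedComponentMk v))} with hRHS
      have hstep : ∀ v : V, ∃ v' : V, v ∈ LHS → (v' ∈ RHS ∧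
          ∃ (w : ↥S.verts) (c' : CsetT H A), c'.1 = H.connectedComponentMk v' ∧
            w ∈ B v ∧ w.1 = ⟨Sum.inr (Sum.inr c'), φ c' v'⟩) := by
        intro v
        by_cases hvL : v ∈ LHS
        swap
        · exact ⟨v, fun h => absurd h hvL⟩
        obtain ⟨hd, hcc⟩ := hvL
        rcases hϑv : ϑ v with u | p | cC
        · cases u
          exact absurd hϑv (hKEY v hcc)
        · exact absurd hϑv (hnotB v hcc p)
        · obtain ⟨u1, u2, u3, hu1, hu2, hu3, h12', h13', h23'⟩ :=
            exists_three_of_three_le_ncard hd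
          obtain ⟨a1, ha1, x1, hx1, hax1⟩ := h4 v u1 hu1
          obtain ⟨a2, ha2, x2, hx2, hax2⟩ := h4 v u2 hu2
          obtain ⟨a3, ha3, x3, hx3, hax3⟩ := h4 v u3 hu3
          have hadj1 : H.Adj v u1 := hu1
          have hadj2 : H.Adj v u2 := hu2
          have hadj3 : H.Adj v u3 := hu3
          have hx12 : x1 ≠ x2 := fun e => Set.disjoint_left.mp (h3 h12') hx1 (e ▸ hx2)
          have hx13 : x1 ≠ x3 := fun e => Set.disjoint_left.mp (h3 h13') hx1 (e ▸ hx3)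
          have hx23 : x2 ≠ x3 := fun e => Set.disjoint_left.mp (h3 h23') hx2 (e ▸ hx3)
          have hx1B : x1 ∉ B v := fun hmem => Set.disjoint_left.mp (h3 hadj1.ne) hmem hx1
          have hx2B : x2 ∉ B v := fun hmem => Set.disjoint_left.mp (h3 hadj2.ne) hmem hx2
          have hx3B : x3 ∉ B v := fun hmem => Set.disjoint_left.mp (h3 hadj3.ne) hmem hx3
          have hamem : ∀ t : Fin 3, (![a1, a2, a3] : Fin 3 → ↥S.verts) t ∈ B v := by
            intro t; fin_cases t
            · exact ha1
            · exact ha2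
            · exact ha3
          have hxmem : ∀ t : Fin 3, (![x1, x2, x3] : Fin 3 → ↥S.verts) t ∉ B v := by
            intro t; fin_cases t
            · exact hx1B
            · exact hx2B
            · exact hx3B
          have hxinj : Function.Injective (![x1, x2, x3] : Fin 3 → ↥S.verts) := by
            intro s' t' hst
            fin_cases s' <;> fin_cases t' <;>
              first
                | rfl
                | exact absurd hst hx12
                | exact absurd hst hx13
                | exact absurd hst hx23
                | exact absurd hst.symm hx12
                | exact absurd hst.symm hx13
                | exact absurd hst.symm hx23
          have haxadj : ∀ t : Fin 3, S.coe.Adj ((![a1, a2, a3] : Fin 3 → ↥S.verts) t)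
              ((![x1, x2, x3] : Fin 3 → ↥S.verts) t) := by
            intro t; fin_cases t
            · exact hax1
            · exact hax2
            · exact hax3
          obtain ⟨w, hwB, hwdeg⟩ :=
            exists_deg3_vertex S.coe (B v) (h2 v) _ _ hamem hxmem hxinj haxadj
          have hwϑ : w.1.1 = Sum.inr (Sum.inr cC) := (hidx v w hwB).trans hϑv
          obtain ⟨⟨iw, xw⟩, hwS⟩ := w
          dsimp at hwϑ
          subst hwϑ
          obtain ⟨n1, n2, n3, hn1, hn2, hn3, hn12, hn13, hn23⟩ :=
            exists_three_of_three_le_ncard hwdeg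
          have extract : ∀ n : ↥S.verts,
              S.coe.Adj ⟨⟨Sum.inr (Sum.inr cC), xw⟩, hwS⟩ n →
              ∃ y : WC cC, (CX cC).Adj xw y ∧ n.1 = ⟨Sum.inr (Sum.inr cC), y⟩ := by
            intro n hn
            obtain ⟨i1, aa, bb, hab, he1, he2⟩ :
                (disjUnion (fam H A r Astar CX)).Adj ⟨Sum.inr (Sum.inr cC), xw⟩ n.1 :=
              S.adj_sub hn
            obtain ⟨hi1, hxa⟩ := Sigma.mk.inj_iff.mp he1
            subst hi1
            have hxa' := eq_of_heq hxa
            subst hxa'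
            exact ⟨bb, hab, he2⟩
          obtain ⟨y1, hy1adj, hy1⟩ := extract n1 hn1
          obtain ⟨y2, hy2adj, hy2⟩ := extract n2 hn2
          obtain ⟨y3, hy3adj, hy3⟩ := extract n3 hn3
          have hyne12 : y1 ≠ y2 := fun e => hn12 (Subtype.ext (hy1.trans (by rw [e, ← hy2])))
          have hyne13 : y1 ≠ y3 := fun e => hn13 (Subtype.ext (hy1.trans (by rw [e, ← hy3])))
          have hyne23 : y2 ≠ y3 := fun e => hn23 (Subtype.ext (hy2.trans (by rw [e, ← hy3])))
          have hdegCX : 3 ≤ ((CX cC).neighborSet xw).ncard :=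
            three_le_ncard_of_three hy1adj hy2adj hy3adj hyne12 hyne13 hyne23 (Set.toFinite _)
          obtain ⟨v', hv'G, hv'd, hxφ⟩ := gtimes_deg3 (φ cC) (pend cC) (pa cC) (pb cC) (pc cC)
            (pQ cC) (hg3 cC) (fun i hi => (hg4 cC i hi).1) (hg9 cC) (hg12 cC) (hg13 cC)
            (hg16 cC) (hg17 cC) xw hdegCX
          have hccv' : H.connectedComponentMk v' = cC.1 :=
            (SimpleGraph.ConnectedComponent.mem_supp_iff _ _).mp hv'G
          have hp : H.connectedComponentMk v' ≠ A ∧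
              IsMinor (compGraph H A) (compGraph H (H.connectedComponentMk v')) := by
            rw [hccv']; exact ⟨cC.2.1, cC.2.2⟩
          refine ⟨v', fun _ => ⟨⟨hv'd, hp⟩, ⟨⟨Sum.inr (Sum.inr cC), xw⟩, hwS⟩, cC,
            hccv'.symm, hwB, ?_⟩⟩
          subst hxφ
          rfl
      choose Φ hΦ using hstep
      have hmaps : ∀ v ∈ LHS, Φ v ∈ RHS := fun v hv => (hΦ v hv).1
      have hinj : Set.InjOn Φ LHS := by
        intro v1 hv1 v2 hv2 he
        by_contra hne
        obtain ⟨-, w1, c1, hc1, hw1B, hw1eq⟩ := hΦ v1 hv1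
        obtain ⟨-, w2, c2, hc2, hw2B, hw2eq⟩ := hΦ v2 hv2
        have hcc12 : c1 = c2 := Subtype.ext (hc1.trans (by rw [he, ← hc2]))
        subst hcc12
        rw [he] at hw1eq
        have hww : w1 = w2 := Subtype.ext (hw1eq.trans hw2eq.symm)
        exact Set.disjoint_left.mp (h3 hne) hw1B (hww ▸ hw2B)
      have hsub : RHS ⊆ LHS := fun v hv => ⟨hv.1, Or.inr hv.2⟩
      obtain ⟨v0, hv0A, hv0d⟩ := hA3
      have hv0cc : H.connectedComponentMk v0 = A :=
        (SimpleGraph.ConnectedComponent.mem_supp_iff _ _).mp hv0A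
      have hv0L : v0 ∈ LHS := ⟨hv0d, Or.inl hv0cc⟩
      have hv0R : v0 ∉ RHS := fun h => h.2.1 hv0cc
      have hlt : RHS.ncard < LHS.ncard :=
        Set.ncard_lt_ncard (Set.ssubset_def.mpr ⟨hsub, fun h => hv0R (h hv0L)⟩)
          (Set.toFinite _)
      have hle : LHS.ncard ≤ RHS.ncard :=
        Set.ncard_le_ncard_of_injOn Φ hmaps hinj (Set.toFinite _)
      omega
  refine ⟨P1, ?_⟩
  rintro k ⟨M, hdisj, hmin⟩
  refine ⟨fun i => restrictPart (fam H A r Astar CX) (M i) (Sum.inl ()), ?_,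
    fun i => P1 (M i) (hmin i)⟩
  intro i j hij
  have hd : Disjoint (M i).edgeSet (M j).edgeSet := hdisj hij
  rw [Set.disjoint_left] at hd
  refine Set.disjoint_left.mpr ?_
  intro e he1 he2
  revert he1 he2
  refine Sym2.ind (fun p q he1 he2 => ?_) e
  have a1 : (M i).Adj ⟨Sum.inl (), p⟩ ⟨Sum.inl (), q⟩ :=
    SimpleGraph.Subgraph.mem_edgeSet.mp he1
  have a2 : (M j).Adj ⟨Sum.inl (), p⟩ ⟨Sum.inl (), q⟩ :=
    SimpleGraph.Subgraph.mem_edgeSet.mp he2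
  exact hd (SimpleGraph.Subgraph.mem_edgeSet.mpr a1)
    (SimpleGraph.Subgraph.mem_edgeSet.mpr a2)
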